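/- Let M be an n×n matrix over a field F, and let G, H be invertible upper triangular n×n matrices. Then Piv(G·M·Hᵀ) = Piv(M), where Piv denotes the set of maximal elements of the support of a matrix with respect to the product order on [n]×[n]. -/
import Mathlib

open Matrix

namespace SchubertCell

/-- The strict down-set of a subset of a poset. -/
def Down {X : Type*} [Preorder X] (Y : Set X) : Set X := {x | ∃ y ∈ Y, x < y}

variable {F : Type*} [Field F] {n : ℕ}

/-- The pivot-set of a matrix: the maximal elements of the support
under the componentwise (product) order on indices. -/
def Piv (M : Matrix (Fin n) (Fin n) F) : Set (Fin n × Fin n) :=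
  {p | M p.1 p.2 ≠ 0 ∧ ∀ q : Fin n × Fin n, p < q → M q.1 q.2 = 0}

/-- Upper triangular matrix. -/
def UpperTri (G : Matrix (Fin n) (Fin n) F) : Prop := ∀ i j : Fin n, j < i → G i j = 0

/-- `M i j` is the last (largest row index) nonzero entry of column `j`. -/
def IsLast (M : Matrix (Fin n) (Fin n) F) (i j : Fin n) : Prop :=
  M i j ≠ 0 ∧ ∀ i' : Fin n, i < i' → M i' j = 0

/-- Reduced reverse column echelon form: (CE1), (CE2), (CE3). -/
def IsRRCEF (M : Matrix (Fin n) (Fin n) F) : Prop :=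
  (∀ j j' : Fin n, j ≤ j' → (∃ i, M i j' ≠ 0) → ∃ i, M i j ≠ 0) ∧
  (∀ i j i' j' : Fin n, IsLast M i j → IsLast M i' j' → j < j' → i' < i) ∧
  (∀ i j : Fin n, IsLast M i j → M i j = 1 ∧ ∀ j' : Fin n, j' ≠ j → M i j' = 0)

/-- `D(α)`: elements of the strict down-set of `α` whose row contains no element of `α`. -/
def DSet (α : Set (Fin n × Fin n)) : Set (Fin n × Fin n) :=
  {p | p ∈ Down α ∧ ∀ k : Fin n, (p.1, k) ∉ α}

lemma entry_eq (M G H : Matrix (Fin n) (Fin n) F) (i j : Fin n) :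
    (G * M * Hᵀ) i j = ∑ k, ∑ l, G i k * M k l * H j l := by
  simp only [Matrix.mul_apply, Matrix.transpose_apply, Finset.sum_mul]
  rw [Finset.sum_comm]

lemma upperTri_diag_ne_zero {G : Matrix (Fin n) (Fin n) F} (hG : IsUnit G)
    (hGt : UpperTri G) (i : Fin n) : G i i ≠ 0 := by
  have hdet : IsUnit G.det := (Matrix.isUnit_iff_isUnit_det G).mp hG
  rw [Matrix.det_of_upperTriangular (fun a b h => hGt a b h)] at hdet
  have := (isUnit_iff_ne_zero.mp hdet)
  intro h
  exact this (Finset.prod_eq_zero (Finset.mem_univ i) h)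

lemma piv_subset (M G H : Matrix (Fin n) (Fin n) F)
    (hG : IsUnit G) (hH : IsUnit H) (hGt : UpperTri G) (hHt : UpperTri H) :
    Piv M ⊆ Piv (G * M * Hᵀ) := by
  rintro ⟨i, j⟩ ⟨hne, hmax⟩
  have key : ∀ a b : Fin n, (i, j) ≤ (a, b) →
      (G * M * Hᵀ) a b = G a i * M i j * H b j *
        (if a = i ∧ b = j then 1 else 0) ∨ True := fun _ _ _ => Or.inr trivial
  constructor
  · show (G * M * Hᵀ) i j ≠ 0
    rw [entry_eq]
    have : ∀ k, ∑ l, G i k * M k l * H j l = if k = i then G i i * M i j * H j j else 0 := by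
      intro k
      by_cases hk : k = i
      · subst hk
        rw [if_pos rfl, Finset.sum_eq_single j]
        · intro l _ hl
          rcases lt_or_ge j l with h | h
          · have : M k l = 0 := hmax (k, l) (by
              constructor
              · exact ⟨le_refl k, le_of_lt h⟩
              · intro hle; exact hl (le_antisymm hle.2 (le_of_lt h)))
            simp [this]
          · have : H j l = 0 := hHt j l (lt_of_le_of_ne h hl)
            simp [this]
        · simp
      · rw [if_neg hk]
        rcases lt_or_ge i k with h | h
        · apply Finset.sum_eq_zero; intro l _
          rcases le_or_gt j l with h2 | h2
          · have : M k l = 0 := hmax (k, l) ⟨⟨le_of_lt h, h2⟩, fun hle => absurd hle.1 (not_le.mpr h)⟩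
            simp [this]
          · simp [hHt j l h2]
        · have : G i k = 0 := hGt i k (lt_of_le_of_ne h hk)
          apply Finset.sum_eq_zero; intro l _; simp [this]
    rw [Finset.sum_congr rfl (fun k _ => this k)]
    simp only [Finset.sum_ite_eq', Finset.mem_univ, if_pos]
    exact mul_ne_zero (mul_ne_zero (upperTri_diag_ne_zero hG hGt i) hne)
      (upperTri_diag_ne_zero hH hHt j)
  · rintro ⟨a, b⟩ hlt
    show (G * M * Hᵀ) a b = 0
    rw [entry_eq]
    apply Finset.sum_eq_zero; intro k _
    apply Finset.sum_eq_zero; intro l _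
    rcases lt_or_ge k a with h | h
    · simp [hGt a k h]
    rcases lt_or_ge l b with h2 | h2
    · simp [hHt b l h2]
    have : M k l = 0 := hmax (k, l) (lt_of_lt_of_le hlt ⟨h, h2⟩)
    simp [this]

theorem pivot_eq_of_triangular_action {F : Type*} [Field F] {n : ℕ}
    (M G H : Matrix (Fin n) (Fin n) F)
    (hG : IsUnit G) (hH : IsUnit H) (hGt : UpperTri G) (hHt : UpperTri H) :
    Piv (G * M * Hᵀ) = Piv M := by
  have hGd : IsUnit G.det := (Matrix.isUnit_iff_isUnit_det G).mp hG
  have hHd : IsUnit H.det := (Matrix.isUnit_iff_isUnit_det H).mp hH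
  haveI : Invertible G := G.invertibleOfIsUnitDet hGd
  haveI : Invertible H := H.invertibleOfIsUnitDet hHd
  have hGinv : UpperTri G⁻¹ := fun i j h =>
    Matrix.blockTriangular_inv_of_blockTriangular (fun a b h => hGt a b h) h
  have hHinv : UpperTri H⁻¹ := fun i j h =>
    Matrix.blockTriangular_inv_of_blockTriangular (fun a b h => hHt a b h) h
  apply le_antisymm
  · intro p hp
    have := piv_subset (G * M * Hᵀ) G⁻¹ H⁻¹ (isUnit_of_invertible _) (isUnit_of_invertible _)
      hGinv hHinv hp
    have heq : G⁻¹ * (G * M * Hᵀ) * (H⁻¹)ᵀ = M := by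
      rw [Matrix.transpose_nonsing_inv]
      calc G⁻¹ * (G * M * Hᵀ) * Hᵀ⁻¹ = (G⁻¹ * G) * M * (Hᵀ * Hᵀ⁻¹) := by
            noncomm_ring
        _ = M := by
            rw [Matrix.nonsing_inv_mul G hGd, Matrix.mul_nonsing_inv Hᵀ (by simpa using hHd)]
            simp
    rwa [heq] at this
  · exact piv_subset M G H hG hH hGt hHt

end SchubertCell
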